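/- Let L be a Latin square of order n, fix rows r_1 ≠ r_2, let π be the associated row-matching permutation on columns, and let C be a single cycle of π of length ℓ. If T(L) is obtained by swapping the entries of rows r_1 and r_2 on the columns of C, then sgn(T(L)) = (−1)^ℓ · sgn(L). In particular, a trade along an odd-length cycle flips the Alon–Tarsi sign, while a trade along an even-length cycle preserves it. -/

import Mathlib

/-- A Latin square of order `n`: an `n × n` array of symbols from `Fin n` whose
rows and columns are each permutations of `Fin n`. -/
structure LatinSquare (n : ℕ) where
  toFun : Fin n → Fin n → Fin n
  row_bij : ∀ r, Function.Bijective (toFun r)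
  col_bij : ∀ c, Function.Bijective (fun r => toFun r c)

/-- The row permutation `ρ_r` of a Latin square, `ρ_r c = L r c`. -/
noncomputable def LatinSquare.rowPerm {n : ℕ} (L : LatinSquare n) (r : Fin n) :
    Equiv.Perm (Fin n) :=
  Equiv.ofBijective (L.toFun r) (L.row_bij r)

/-- The column permutation `κ_c` of a Latin square, `κ_c r = L r c`. -/
noncomputable def LatinSquare.colPerm {n : ℕ} (L : LatinSquare n) (c : Fin n) :
    Equiv.Perm (Fin n) :=
  Equiv.ofBijective (fun r => L.toFun r c) (L.col_bij c)

/-- The Alon–Tarsi sign of a Latin square: the product of the signs of all row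
permutations and all column permutations. -/
noncomputable def LatinSquare.sign {n : ℕ} (L : LatinSquare n) : ℤˣ :=
  (∏ r : Fin n, Equiv.Perm.sign (L.rowPerm r)) *
  (∏ c : Fin n, Equiv.Perm.sign (L.colPerm c))

/-- The row-matching permutation `π` of two rows `r₁, r₂` of a Latin square:
`π c` is the unique column `c'` with `L r₂ c' = L r₁ c`. -/
noncomputable def LatinSquare.rowMatch {n : ℕ} (L : LatinSquare n) (r₁ r₂ : Fin n) :
    Equiv.Perm (Fin n) :=
  (L.rowPerm r₁).trans (L.rowPerm r₂).symm

/-- The cycle trade on a pair of rows: swap the entries of rows `r₁` and `r₂`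
exactly in the columns belonging to `C`. -/
def trade {n : ℕ} (r₁ r₂ : Fin n) (C : Finset (Fin n)) [DecidableEq (Fin n)]
    (f : Fin n → Fin n → Fin n) : Fin n → Fin n → Fin n := fun r c =>
  if c ∈ C then
    if r = r₁ then f r₂ c else if r = r₂ then f r₁ c else f r c
  else f r c

/-- **Sign effect of a single-cycle trade.** If `C` is a single cycle (orbit) of
the row-matching permutation of rows `r₁ ≠ r₂` of a Latin square `L`, of length
`ℓ`, then swapping the two rows on exactly the columns of `C` multiplies the
Alon–Tarsi sign by `(-1)^ℓ`: an odd cycle flips the sign, an even cycle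
preserves it. -/
theorem sign_single_cycle_trade {n : ℕ} (L L' : LatinSquare n) (r₁ r₂ : Fin n)
    (hne : r₁ ≠ r₂) (C : Finset (Fin n)) (ℓ : ℕ) (hℓ : C.card = ℓ)
    (horbit : ∃ c₀ ∈ C, ∀ c : Fin n, c ∈ C ↔ ∃ k : ℕ, (L.rowMatch r₁ r₂ ^ k) c₀ = c)
    (hL' : L'.toFun = trade r₁ r₂ C L.toFun) :
    L'.sign = (-1) ^ ℓ * L.sign := by
  classical
  obtain ⟨c₀, hc₀, hCmem⟩ := horbit
  set π : Equiv.Perm (Fin n) := L.rowMatch r₁ r₂ with hπ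
  have hne' : r₂ ≠ r₁ := hne.symm
  -- membership in C is equivalent to being in the same cycle as c₀
  have hmem : ∀ c, c ∈ C ↔ π.SameCycle c₀ c := by
    intro c
    rw [hCmem]
    constructor
    · rintro ⟨k, hk⟩
      exact ⟨(k : ℤ), by simpa [zpow_natCast] using hk⟩
    · intro h
      obtain ⟨k, -, hk⟩ := h.exists_pow_eq'
      exact ⟨k, hk⟩
  have hinv : ∀ c, π c ∈ C ↔ c ∈ C := fun c => by
    rw [hmem, hmem, Equiv.Perm.sameCycle_apply_right]
  -- applications of the row permutations of L'
  have hrow1 : ∀ c, L'.rowPerm r₁ c = if c ∈ C then L.toFun r₂ c else L.toFun r₁ c := by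
    intro c
    show L'.toFun r₁ c = _
    simp [hL', trade]
  have hrow2 : ∀ c, L'.rowPerm r₂ c = if c ∈ C then L.toFun r₁ c else L.toFun r₂ c := by
    intro c
    show L'.toFun r₂ c = _
    simp [hL', trade, hne']
  have hrowother : ∀ r, r ≠ r₁ → r ≠ r₂ → L'.rowPerm r = L.rowPerm r := by
    intro r h1 h2
    refine Equiv.ext fun c => ?_
    show L'.toFun r c = L.toFun r c
    simp [hL', trade, h1, h2]
  -- the two correction permutations
  set A : Equiv.Perm (Fin n) := (L.rowPerm r₁)⁻¹ * L'.rowPerm r₁ with hA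
  set B : Equiv.Perm (Fin n) := (L.rowPerm r₂)⁻¹ * L'.rowPerm r₂ with hB
  have hπapp : ∀ c, π c = (L.rowPerm r₂)⁻¹ (L.rowPerm r₁ c) := by
    intro c; rfl
  have hBapp : ∀ c, B c = if c ∈ C then π c else c := by
    intro c
    by_cases hc : c ∈ C
    · simp [hB, Equiv.Perm.mul_apply, hrow2, hc, hπapp,
        show (L.rowPerm r₁) c = L.toFun r₁ c from rfl]
    · simp only [hB, Equiv.Perm.mul_apply, hrow2, if_neg hc]
      rw [show L.toFun r₂ c = L.rowPerm r₂ c from rfl, Equiv.Perm.inv_def, Equiv.symm_apply_apply]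
  have hAapp : ∀ c, A c = if c ∈ C then π⁻¹ c else c := by
    intro c
    by_cases hc : c ∈ C
    · have : π (π⁻¹ c) = c := π.apply_symm_apply c
      have h2 : (L.rowPerm r₂)⁻¹ (L.rowPerm r₁ (π⁻¹ c)) = c := by
        rw [← hπapp]; exact this
      have h3 : L.toFun r₂ c = L.rowPerm r₁ (π⁻¹ c) := by
        have := congrArg (L.rowPerm r₂) h2
        exact (by simpa [Equiv.Perm.inv_def] using this.symm : L.rowPerm r₂ c = _)
      simp only [hA, Equiv.Perm.mul_apply, hrow1, if_pos hc]
      rw [h3]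
      simp
    · simp only [hA, Equiv.Perm.mul_apply, hrow1, if_neg hc]
      rw [show L.toFun r₁ c = L.rowPerm r₁ c from rfl, Equiv.Perm.inv_def, Equiv.symm_apply_apply]
  have hABone : A * B = 1 := by
    ext c
    simp only [Equiv.Perm.mul_apply, Equiv.Perm.one_apply]
    by_cases hc : c ∈ C
    · rw [hBapp, if_pos hc, hAapp, if_pos ((hinv c).mpr hc)]
      simp
    · rw [hBapp, if_neg hc, hAapp, if_neg hc]
  have hsignAB : Equiv.Perm.sign A * Equiv.Perm.sign B = 1 := by
    rw [← map_mul, hABone, map_one]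
  -- row products
  have hrp1 : L'.rowPerm r₁ = L.rowPerm r₁ * A := by
    rw [hA, ← mul_assoc, mul_inv_cancel, one_mul]
  have hrp2 : L'.rowPerm r₂ = L.rowPerm r₂ * B := by
    rw [hB, ← mul_assoc, mul_inv_cancel, one_mul]
  have hrowfac : ∀ r, Equiv.Perm.sign (L'.rowPerm r) = Equiv.Perm.sign (L.rowPerm r) *
      (if r = r₁ then Equiv.Perm.sign A else if r = r₂ then Equiv.Perm.sign B else 1) := by
    intro r
    by_cases h1 : r = r₁
    · subst h1; rw [hrp1, map_mul, if_pos rfl]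
    by_cases h2 : r = r₂
    · subst h2; rw [hrp2, map_mul, if_neg h1, if_pos rfl]
    · rw [hrowother r h1 h2, if_neg h1, if_neg h2, mul_one]
  have hprod_ite : (∏ r : Fin n, (if r = r₁ then Equiv.Perm.sign A
      else if r = r₂ then Equiv.Perm.sign B else 1)) = 1 := by
    rw [← Finset.prod_subset (Finset.subset_univ ({r₁, r₂} : Finset (Fin n)))
      (by intro x _ hx
          simp only [Finset.mem_insert, Finset.mem_singleton, not_or] at hx
          simp [hx.1, hx.2])]
    rw [Finset.prod_pair hne]
    simp [hne']
    exact hsignAB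
  have hrowprod : (∏ r : Fin n, Equiv.Perm.sign (L'.rowPerm r)) =
      ∏ r : Fin n, Equiv.Perm.sign (L.rowPerm r) := by
    calc (∏ r : Fin n, Equiv.Perm.sign (L'.rowPerm r))
        = ∏ r : Fin n, (Equiv.Perm.sign (L.rowPerm r) *
            (if r = r₁ then Equiv.Perm.sign A else if r = r₂ then Equiv.Perm.sign B else 1)) :=
          Finset.prod_congr rfl fun r _ => hrowfac r
      _ = (∏ r : Fin n, Equiv.Perm.sign (L.rowPerm r)) * 1 := by
          rw [Finset.prod_mul_distrib, hprod_ite]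
      _ = _ := mul_one _
  -- column products
  have hcolfac : ∀ c, Equiv.Perm.sign (L'.colPerm c) =
      (if c ∈ C then (-1 : ℤˣ) else 1) * Equiv.Perm.sign (L.colPerm c) := by
    intro c
    by_cases hc : c ∈ C
    · have hκ : L'.colPerm c = L.colPerm c * Equiv.swap r₁ r₂ := by
        refine Equiv.ext fun r => ?_
        show L'.toFun r c = L.toFun (Equiv.swap r₁ r₂ r) c
        rw [hL']
        simp only [trade, if_pos hc]
        by_cases h1 : r = r₁
        · subst h1; simp [Equiv.swap_apply_left]
        by_cases h2 : r = r₂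
        · subst h2; simp [Equiv.swap_apply_right, h1]
        · simp [h1, h2, Equiv.swap_apply_of_ne_of_ne h1 h2]
      rw [hκ, map_mul, Equiv.Perm.sign_swap hne, if_pos hc, mul_comm]
    · have hκ : L'.colPerm c = L.colPerm c := by
        refine Equiv.ext fun r => ?_
        show L'.toFun r c = L.toFun r c
        simp [hL', trade, hc]
      rw [hκ, if_neg hc, one_mul]
  have hcolprod : (∏ c : Fin n, Equiv.Perm.sign (L'.colPerm c)) =
      (-1 : ℤˣ) ^ ℓ * ∏ c : Fin n, Equiv.Perm.sign (L.colPerm c) := by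
    calc (∏ c : Fin n, Equiv.Perm.sign (L'.colPerm c))
        = ∏ c : Fin n, ((if c ∈ C then (-1 : ℤˣ) else 1) * Equiv.Perm.sign (L.colPerm c)) :=
          Finset.prod_congr rfl fun c _ => hcolfac c
      _ = (∏ c : Fin n, (if c ∈ C then (-1 : ℤˣ) else 1)) *
            ∏ c : Fin n, Equiv.Perm.sign (L.colPerm c) := Finset.prod_mul_distrib
      _ = (-1 : ℤˣ) ^ ℓ * ∏ c : Fin n, Equiv.Perm.sign (L.colPerm c) := by
          rw [Finset.prod_ite_mem, Finset.univ_inter, Finset.prod_const, hℓ]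
  show (∏ r : Fin n, Equiv.Perm.sign (L'.rowPerm r)) *
      (∏ c : Fin n, Equiv.Perm.sign (L'.colPerm c)) = _
  rw [hrowprod, hcolprod]
  unfold LatinSquare.sign
  rw [mul_left_comm]
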